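/- Let P be a transition kernel on a pseudometric space (E,d) such that for every ε > 0 there exists r > 0 with P(x, B_r(x)) > 1 − ε for all x ∈ E. Then every small set for P is bounded. -/

import Mathlib

open MeasureTheory ProbabilityTheory
open scoped ENNReal

/-- The `k`-step kernel `P^k`. -/
noncomputable def iterKernel {E : Type*} [MeasurableSpace E] (P : Kernel E E) : ℕ → Kernel E E
  | 0 => Kernel.id
  | n + 1 => P ∘ₖ iterKernel P n

/-- `C` is a small set for `P`: `P^k(x,·) ≥ δ ν` on `C` for some `k ≥ 1`, `δ ∈ (0,1)` and a
probability measure `ν`. -/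
def IsSmallSet {E : Type*} [MeasurableSpace E] (P : Kernel E E) (C : Set E) : Prop :=
  ∃ (k : ℕ) (δ : ℝ) (ν : Measure E), 1 ≤ k ∧ δ ∈ Set.Ioo (0:ℝ) 1 ∧ IsProbabilityMeasure ν ∧
    ∀ x ∈ C, ∀ A : Set E, MeasurableSet A → ENNReal.ofReal δ * ν A ≤ iterKernel P k x A

instance iterKernel.isMarkovKernel {E : Type*} [MeasurableSpace E] (P : Kernel E E)
    [IsMarkovKernel P] (n : ℕ) : IsMarkovKernel (iterKernel P n) := by
  induction n with
  | zero => rw [iterKernel]; infer_instance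
  | succ n ih => rw [iterKernel]; infer_instance

lemma iterKernel_concentrates {E : Type*} [PseudoMetricSpace E] [MeasurableSpace E] [BorelSpace E]
    (P : Kernel E E) [IsMarkovKernel P] {r ε : ℝ} (hr : 0 ≤ r)
    (h1 : ∀ x : E, P x (Metric.ball x r)ᶜ ≤ ENNReal.ofReal ε) :
    ∀ n : ℕ, ∀ x : E, iterKernel P n x (Metric.closedBall x (n * r))ᶜ ≤ n * ENNReal.ofReal ε := by
  intro n
  induction n with
  | zero =>
    intro x
    rw [iterKernel, Kernel.id_apply]
    have hx : x ∈ Metric.closedBall x ((0 : ℕ) * r) := by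
      simp [Metric.mem_closedBall]
    rw [Measure.dirac_apply' _ (Metric.isClosed_closedBall.measurableSet.compl)]
    simp [Set.indicator_of_notMem (by simpa using hx : x ∉ (Metric.closedBall x ((0:ℕ) * r))ᶜ)]
  | succ n ih =>
    intro x
    have hsmeas : MeasurableSet (Metric.closedBall x (((n : ℕ) + 1 : ℕ) * r))ᶜ :=
      Metric.isClosed_closedBall.measurableSet.compl
    rw [iterKernel, Kernel.comp_apply' _ _ _ hsmeas]
    set μ := iterKernel P n x with hμ
    have : IsProbabilityMeasure μ := by rw [hμ]; infer_instance
    set B := Metric.closedBall x ((n : ℕ) * r) with hB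
    have hBmeas : MeasurableSet B := Metric.isClosed_closedBall.measurableSet
    -- pointwise bound on B
    have hpt : ∀ y ∈ B, P y (Metric.closedBall x (((n : ℕ) + 1 : ℕ) * r))ᶜ ≤ ENNReal.ofReal ε := by
      intro y hy
      refine le_trans (measure_mono ?_) (h1 y)
      intro z hz
      intro hzball
      apply hz
      have hxy : dist x y ≤ (n : ℝ) * r := by
        rw [hB, Metric.mem_closedBall, dist_comm] at hy; exact hy
      have hyz : dist y z < r := Metric.mem_ball'.mp hzball
      rw [Metric.mem_closedBall, dist_comm]
      calc dist x z ≤ dist x y + dist y z := dist_triangle x y z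
        _ ≤ (n : ℝ) * r + r := by linarith
        _ = ((n : ℕ) + 1 : ℕ) * r := by push_cast; ring
    calc ∫⁻ y, P y (Metric.closedBall x (((n : ℕ) + 1 : ℕ) * r))ᶜ ∂μ
        = (∫⁻ y in B, P y (Metric.closedBall x (((n : ℕ) + 1 : ℕ) * r))ᶜ ∂μ)
          + ∫⁻ y in Bᶜ, P y (Metric.closedBall x (((n : ℕ) + 1 : ℕ) * r))ᶜ ∂μ :=
          (lintegral_add_compl _ hBmeas).symm
      _ ≤ (∫⁻ _ in B, ENNReal.ofReal ε ∂μ) + ∫⁻ _ in Bᶜ, 1 ∂μ := by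
          exact add_le_add
            (setLIntegral_mono measurable_const (fun y hy => hpt y hy))
            (setLIntegral_mono measurable_const (fun y _ => prob_le_one))
      _ = ENNReal.ofReal ε * μ B + μ Bᶜ := by
          simp [lintegral_const, Measure.restrict_apply_univ]
      _ ≤ ENNReal.ofReal ε * 1 + (n : ℕ) * ENNReal.ofReal ε := by
          gcongr
          · exact prob_le_one
          · exact ih x
      _ = ((n : ℕ) + 1 : ℕ) * ENNReal.ofReal ε := by push_cast; ring

/-- If a Markov kernel `P` on a pseudometric space satisfies the uniform local-move property
(`∀ ε > 0, ∃ r > 0, P(x, B_r(x)) > 1 − ε` for all `x`), then every small set is bounded. -/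
theorem smallSet_bounded_of_local_moves
    {E : Type*} [PseudoMetricSpace E] [MeasurableSpace E] [BorelSpace E]
    (P : Kernel E E) [IsMarkovKernel P]
    (hloc : ∀ ε : ℝ, 0 < ε → ∃ r : ℝ, 0 < r ∧
      ∀ x : E, 1 - ENNReal.ofReal ε < P x (Metric.ball x r))
    (C : Set E) (hC : IsSmallSet P C) :
    Bornology.IsBounded C := by
  rcases C.eq_empty_or_nonempty with rfl | ⟨x₀, hx₀⟩
  · exact Bornology.isBounded_empty
  obtain ⟨k, δ, ν, hk, ⟨hδ0, hδ1⟩, hνprob, hsmall⟩ := hC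
  set ε : ℝ := δ / (3 * k) with hε
  have hkpos : (0 : ℝ) < k := by exact_mod_cast hk
  have hεpos : 0 < ε := by positivity
  obtain ⟨r, hrpos, hr⟩ := hloc ε hεpos
  -- complement bound for one step
  have h1 : ∀ x : E, P x (Metric.ball x r)ᶜ ≤ ENNReal.ofReal ε := by
    intro x
    have := hr x
    rw [measure_compl Metric.isOpen_ball.measurableSet (measure_ne_top _ _)]
    rw [measure_univ]
    rw [tsub_le_iff_right]
    calc (1 : ℝ≥0∞) ≤ ENNReal.ofReal ε + (1 - ENNReal.ofReal ε) := le_add_tsub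
      _ ≤ ENNReal.ofReal ε + P x (Metric.ball x r) := add_le_add le_rfl this.le
  have hiter := iterKernel_concentrates P hrpos.le h1 k
  -- For any x ∈ C : ν (closedBall x (k*r))ᶜ ≤ ofReal (1/3)
  have key : ∀ x ∈ C, ν (Metric.closedBall x ((k : ℝ) * r))ᶜ ≤ ENNReal.ofReal (1/3) := by
    intro x hx
    have hmeas : MeasurableSet (Metric.closedBall x ((k : ℝ) * r))ᶜ :=
      Metric.isClosed_closedBall.measurableSet.compl
    have h2 := hsmall x hx _ hmeas
    have h3 : ENNReal.ofReal δ * ν (Metric.closedBall x ((k : ℝ) * r))ᶜ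
        ≤ (k : ℝ≥0∞) * ENNReal.ofReal ε := h2.trans (hiter x)
    have h4 : (k : ℝ≥0∞) * ENNReal.ofReal ε = ENNReal.ofReal δ * ENNReal.ofReal (1/3) := by
      rw [← ENNReal.ofReal_natCast, ← ENNReal.ofReal_mul (by positivity),
        ← ENNReal.ofReal_mul hδ0.le]
      congr 1
      field_simp [hε]
      rw [hε]; field_simp [hkpos.ne']
    rw [h4] at h3
    exact (ENNReal.mul_le_mul_iff_right (by simp [hδ0]) (by simp)).mp h3
  -- the two closed balls intersect
  refine (Metric.isBounded_iff_subset_closedBall x₀).mpr ⟨2 * ((k : ℝ) * r), ?_⟩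
  intro x hx
  have hmeet : (Metric.closedBall x ((k : ℝ) * r) ∩ Metric.closedBall x₀ ((k : ℝ) * r)).Nonempty := by
    by_contra h
    rw [Set.not_nonempty_iff_eq_empty] at h
    have : (1 : ℝ≥0∞) = ν ((Metric.closedBall x ((k : ℝ) * r))ᶜ ∪
        (Metric.closedBall x₀ ((k : ℝ) * r))ᶜ) := by
      rw [← Set.compl_inter, h, Set.compl_empty, measure_univ]
    have hle : (1 : ℝ≥0∞) ≤ ENNReal.ofReal (1/3) + ENNReal.ofReal (1/3) :=
      this.le.trans ((measure_union_le _ _).trans (add_le_add (key x hx) (key x₀ hx₀)))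
    rw [← ENNReal.ofReal_add (by norm_num) (by norm_num), ← ENNReal.ofReal_one] at hle
    have := (ENNReal.ofReal_le_ofReal_iff (by norm_num)).mp hle
    linarith
  obtain ⟨y, hy1, hy2⟩ := hmeet
  rw [Metric.mem_closedBall] at hy1 hy2 ⊢
  calc dist x x₀ ≤ dist x y + dist y x₀ := dist_triangle _ _ _
    _ ≤ (k : ℝ) * r + (k : ℝ) * r := by
        rw [dist_comm] at hy1
        linarith
    _ = 2 * ((k : ℝ) * r) := by ring
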